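/- arXiv:1205.3321 — 3 statements merged into one kernel-verified Lean document; each statement's English description precedes it below -/
import Mathlib

section
/- Any two cores of a finite relational structure are isomorphic. -/
structure Atom (σ : Type*) (ρ : σ → ℕ) (V : Type*) where
  rel : σ
  args : Fin (ρ rel) → V

variable {σ : Type*} {ρ : σ → ℕ} {V W : Type*}

def Atom.map (h : V → W) (a : Atom σ ρ V) : Atom σ ρ W :=
  ⟨a.rel, h ∘ a.args⟩

def Atom.vars (a : Atom σ ρ V) : Set V := Set.range a.args

def qvars (Q : Set (Atom σ ρ V)) : Set V := ⋃ a ∈ Q, a.vars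

def IsHom (h : V → W) (Q : Set (Atom σ ρ V)) (D : Set (Atom σ ρ W)) : Prop :=
  ∀ a ∈ Q, a.map h ∈ D

def IsCore (Q C : Set (Atom σ ρ V)) : Prop :=
  C ⊆ Q ∧ (∃ h : V → V, IsHom h Q C) ∧
    ∀ C' ⊆ C, (∃ h : V → V, IsHom h Q C') → C' = C

lemma Atom.map_map {U : Type*} (h : V → W) (k : W → U) (a : Atom σ ρ V) :
    (a.map h).map k = a.map (k ∘ h) := rfl

lemma Atom.map_id (a : Atom σ ρ V) : a.map id = a := rfl

lemma isHom_comp {f g : V → V} {A B D : Set (Atom σ ρ V)}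
    (hf : IsHom f A B) (hg : IsHom g B D) : IsHom (g ∘ f) A D :=
  fun a ha => hg _ (hf a ha)

lemma isHom_iterate {φ : V → V} {C : Set (Atom σ ρ V)} (h : IsHom φ C C) :
    ∀ n : ℕ, IsHom φ^[n] C C := by
  intro n
  induction n with
  | zero => intro a ha; simpa [Atom.map_id] using ha
  | succ n ih =>
    rw [Function.iterate_succ]
    exact isHom_comp h ih

lemma mem_qvars_iff {x : V} {C : Set (Atom σ ρ V)} :
    x ∈ qvars C ↔ ∃ a ∈ C, ∃ i, a.args i = x := by
  simp [qvars, Atom.vars]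

lemma isHom_mapsTo {f : V → V} {A B : Set (Atom σ ρ V)} (hf : IsHom f A B) :
    Set.MapsTo f (qvars A) (qvars B) := by
  intro x hx
  obtain ⟨a, ha, i, rfl⟩ := mem_qvars_iff.mp hx
  exact mem_qvars_iff.mpr ⟨a.map f, hf a ha, i, rfl⟩

lemma core_surjOn {Q C : Set (Atom σ ρ V)} (hc : IsCore Q C) {φ : V → V}
    (hφ : IsHom φ Q C) : Set.SurjOn φ (qvars C) (qvars C) := by
  obtain ⟨hCQ, ⟨h, hh⟩, hmin⟩ := hc
  have heq : (Atom.map φ) '' C = C := by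
    apply hmin
    · rintro _ ⟨a, ha, rfl⟩; exact hφ a (hCQ ha)
    · exact ⟨φ ∘ h, fun a ha => ⟨a.map h, hh a ha, rfl⟩⟩
  intro x hx
  obtain ⟨a, ha, i, rfl⟩ := mem_qvars_iff.mp hx
  rw [← heq] at ha
  obtain ⟨b, hb, rfl⟩ := ha
  exact ⟨b.args i, mem_qvars_iff.mpr ⟨b, hb, i, rfl⟩, rfl⟩

lemma exists_iterate_id {S : Set V} (hS : S.Finite) {φ : V → V}
    (hmap : Set.MapsTo φ S S) (hsurj : Set.SurjOn φ S S) :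
    ∃ n : ℕ, 0 < n ∧ ∀ x ∈ S, φ^[n] x = x := by
  have hbij : Set.BijOn φ S S := (hS.surjOn_iff_bijOn_of_mapsTo hmap).mp hsurj
  haveI := hS.fintype
  let e : S ≃ S := hbij.equiv φ
  have he : ∀ z : S, (e z : V) = φ (z : V) := fun z => rfl
  have key : ∀ (k : ℕ) (x : S), ((e ^ k) x : V) = φ^[k] (x : V) := by
    intro k
    induction k with
    | zero => intro x; rfl
    | succ k ih =>
      intro x
      have h1 : (e ^ (k + 1)) x = e ((e ^ k) x) := by
        rw [pow_succ']; rfl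
      rw [h1, he, ih, Function.iterate_succ_apply']
  refine ⟨orderOf e, orderOf_pos e, fun x hx => ?_⟩
  have := key (orderOf e) ⟨x, hx⟩
  rw [pow_orderOf_eq_one] at this
  simpa using this.symm

/-- any two cores of a finite relational structure are isomorphic:
there are mutually inverse homomorphisms between them. -/
theorem stmt3 {σ : Type*} {ρ : σ → ℕ} {V : Type*} (Q C₁ C₂ : Set (Atom σ ρ V))
    (hfin : Q.Finite) (h₁ : IsCore Q C₁) (h₂ : IsCore Q C₂) :
    ∃ f g : V → V, IsHom f C₁ C₂ ∧ IsHom g C₂ C₁ ∧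
      (∀ x ∈ qvars C₁, g (f x) = x) ∧ (∀ y ∈ qvars C₂, f (g y) = y) := by
  obtain ⟨hC₁Q, ⟨p, hp⟩, hmin₁⟩ := id h₁
  obtain ⟨hC₂Q, ⟨q, hq⟩, hmin₂⟩ := id h₂
  -- φ = p ∘ q : hom Q → C₁
  have hφQ : IsHom (p ∘ q) Q C₁ :=
    isHom_comp hq (fun a ha => hp a (hC₂Q ha))
  have hφC : IsHom (p ∘ q) C₁ C₁ := fun a ha => hφQ a (hC₁Q ha)
  have hC₁fin : (qvars C₁).Finite := by
    apply Set.Finite.biUnion (hfin.subset hC₁Q)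
    intro a _
    exact (Set.finite_range a.args)
  have hsurj := core_surjOn h₁ hφQ
  obtain ⟨n, hn, hiter⟩ := exists_iterate_id hC₁fin (isHom_mapsTo hφC) hsurj
  set φ := p ∘ q with hφdef
  -- F = q (restricted to C₁), G = φ^[n-1] ∘ p
  refine ⟨q, φ^[n-1] ∘ p, fun a ha => hq a (hC₁Q ha), ?_, ?_, ?_⟩
  · exact isHom_comp (fun a ha => hp a (hC₂Q ha)) (isHom_iterate hφC (n-1))
  · intro x hx
    show φ^[n-1] (φ x) = x
    rw [← Function.iterate_succ_apply, Nat.succ_eq_add_one,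
      Nat.sub_add_cancel hn]
    exact hiter x hx
  · -- ψ = q ∘ φ^[n-1] ∘ p : hom Q → C₂, surjective on qvars C₂
    have hGhom : IsHom (φ^[n-1] ∘ p) Q C₁ := isHom_comp hp (isHom_iterate hφC (n-1))
    have hψQ : IsHom (q ∘ (φ^[n-1] ∘ p)) Q C₂ :=
      isHom_comp hGhom (fun a ha => hq a (hC₁Q ha))
    have hψC : IsHom (q ∘ (φ^[n-1] ∘ p)) C₂ C₂ := fun a ha => hψQ a (hC₂Q ha)
    have hC₂fin : (qvars C₂).Finite := by
      apply Set.Finite.biUnion (hfin.subset hC₂Q)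
      intro a _
      exact (Set.finite_range a.args)
    have hψsurj := core_surjOn h₂ hψQ
    have hψbij : Set.BijOn (q ∘ (φ^[n-1] ∘ p)) (qvars C₂) (qvars C₂) :=
      (hC₂fin.surjOn_iff_bijOn_of_mapsTo (isHom_mapsTo hψC)).mp hψsurj
    have hGinj : Set.InjOn (φ^[n-1] ∘ p) (qvars C₂) := by
      intro a ha b hb hab
      exact hψbij.injOn ha hb (congrArg q hab)
    have hGhomC : IsHom (φ^[n-1] ∘ p) C₂ C₁ :=
      isHom_comp (fun a ha => hp a (hC₂Q ha)) (isHom_iterate hφC (n-1))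
    have hFhomC : IsHom q C₁ C₂ := fun a ha => hq a (hC₁Q ha)
    have hGF : ∀ x ∈ qvars C₁, (φ^[n-1] ∘ p) (q x) = x := by
      intro x hx
      show φ^[n-1] (φ x) = x
      rw [← Function.iterate_succ_apply, Nat.succ_eq_add_one,
        Nat.sub_add_cancel hn]
      exact hiter x hx
    intro y hy
    have hGy : (φ^[n-1] ∘ p) y ∈ qvars C₁ := isHom_mapsTo hGhomC hy
    have hFGy : q ((φ^[n-1] ∘ p) y) ∈ qvars C₂ := isHom_mapsTo hFhomC hGy
    exact hGinj hFGy hy (hGF _ hGy)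
end

section
/- Let q be an atom in some core Q' of Q for which (H_{Q'}, H_V) has a tree projection. Then for every O ⊆ vars(q), O is tp-covered in Q with respect to V (i.e., some core of Q ∧ atom(O) has a tree projection w.r.t. H_V). -/
variable {σ : Type*} {ρ : σ → ℕ} {V W : Type*}

def hgle {α : Type*} (H1 H2 : Set (Set α)) : Prop :=
  ∀ e ∈ H1, ∃ f ∈ H2, e ⊆ f

def HGAcyclic {α : Type*} (H : Set (Set α)) : Prop :=
  ∃ T : SimpleGraph H, T.Connected ∧ T.IsAcyclic ∧
    ∀ (x : α) (u v : H) (hu : x ∈ (u : Set α)) (hv : x ∈ (v : Set α)),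
      (T.induce {w : H | x ∈ (w : Set α)}).Reachable ⟨u, hu⟩ ⟨v, hv⟩

def HasTP {α : Type*} (H1 H2 : Set (Set α)) : Prop :=
  ∃ Ha, HGAcyclic Ha ∧ hgle H1 Ha ∧ hgle Ha H2

def queryHG {σ : Type*} {ρ : σ → ℕ} {V : Type*} (Q : Set (Atom σ ρ V)) : Set (Set V) :=
  { s | ∃ a ∈ Q, s = a.vars }

lemma exists_idem_iterate {V : Type*} (S : Set V) (hS : S.Finite) (f : V → V)
    (hf : Set.MapsTo f S S) :
    ∃ n, 1 ≤ n ∧ ∀ x ∈ S, f^[n] (f^[n] x) = f^[n] x := by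
  haveI : Finite S := hS.to_subtype
  have hmaps : ∀ k, Set.MapsTo f^[k] S S := fun k => hf.iterate k
  set F : ℕ → (S → S) := fun k x => ⟨f^[k] x, hmaps k x.2⟩ with hF
  obtain ⟨i, j, hne, hij⟩ := Finite.exists_ne_map_eq_of_infinite F
  have key : ∀ i j : ℕ, i < j → (∀ x ∈ S, f^[i] x = f^[j] x) →
      ∃ n, 1 ≤ n ∧ ∀ x ∈ S, f^[n] (f^[n] x) = f^[n] x := by
    intro i j hlt hyp
    set p := j - i with hp
    have hp1 : 1 ≤ p := by omega
    have hipj : i + p = j := by omega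
    have step : ∀ m, i ≤ m → ∀ x ∈ S, f^[m + p] x = f^[m] x := by
      intro m hm x hx
      have h1 : f^[m + p] x = f^[m - i] (f^[i + p] x) := by
        rw [← Function.iterate_add_apply]; congr 1; omega
      have h2 : f^[m] x = f^[m - i] (f^[i] x) := by
        rw [← Function.iterate_add_apply]; congr 1; omega
      rw [h1, h2, hipj, hyp x hx]
    have mult : ∀ k m, i ≤ m → ∀ x ∈ S, f^[m + p * k] x = f^[m] x := by
      intro k
      induction k with
      | zero => simp
      | succ k ih =>
        intro m hm x hx
        have : m + p * (k + 1) = (m + p * k) + p := by ring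
        rw [this, step (m + p * k) (by omega) x hx, ih m hm x hx]
    refine ⟨p * (i + 1), by nlinarith, fun x hx => ?_⟩
    rw [← Function.iterate_add_apply]
    exact mult (i + 1) (p * (i + 1)) (by nlinarith) x hx
  have heq : ∀ i j : ℕ, F i = F j → ∀ x ∈ S, f^[i] x = f^[j] x := by
    intro i j h x hx
    exact congrArg Subtype.val (congrFun h ⟨x, hx⟩)
  rcases hne.lt_or_gt with hlt | hlt
  · exact key i j hlt (heq i j hij)
  · exact key j i hlt (heq j i hij.symm)

/-- if `q` is an atom of a core `Q'` of `Q` such that `(H_{Q'}, H_V)` has a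
tree projection, then every `O ⊆ vars(q)` (enumerated by the tuple `t` of the fresh
symbol `r₀`) is tp-covered in `Q` w.r.t. `V`. -/
theorem stmt6 {σ : Type*} {ρ : σ → ℕ} {V : Type*} (Q Q' : Set (Atom σ ρ V))
    (HV : Set (Set V)) (hfin : Q.Finite) (hcore : IsCore Q Q')
    (htp : HasTP (queryHG Q') HV) (q : Atom σ ρ V) (hq : q ∈ Q')
    (r₀ : σ) (hfresh : ∀ a ∈ Q, a.rel ≠ r₀) (t : Fin (ρ r₀) → V)
    (ht : Set.range t ⊆ Set.range q.args) :
    ∃ C : Set (Atom σ ρ V), IsCore (insert ⟨r₀, t⟩ Q) C ∧ HasTP (queryHG C) HV := by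

  classical
  set a₀ : Atom σ ρ V := ⟨r₀, t⟩ with ha₀def
  obtain ⟨hsub, ⟨h, hh⟩, hmin⟩ := hcore
  -- qvars Q is finite and h maps it into itself
  have hSfin : (qvars Q).Finite :=
    Set.Finite.biUnion hfin (fun a _ => Set.finite_range a.args)
  have hmaps : Set.MapsTo h (qvars Q) (qvars Q) := by
    intro x hx
    simp only [qvars, Set.mem_iUnion] at hx ⊢
    obtain ⟨a, haQ, hxa⟩ := hx
    obtain ⟨i, hi⟩ := hxa
    exact ⟨a.map h, hsub (hh a haQ), ⟨i, by simp [Atom.map, hi]⟩⟩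
  obtain ⟨n, hn1, hidem⟩ := exists_idem_iterate (qvars Q) hSfin h hmaps
  set g : V → V := h^[n] with hgdef
  -- g is a homomorphism Q → Q'
  have hQ'Q' : IsHom h Q' Q' := fun a ha => hh a (hsub ha)
  have hiter : ∀ k, IsHom h^[k + 1] Q Q' := by
    intro k
    induction k with
    | zero => intro a ha; simpa using hh a ha
    | succ k ih =>
      intro a ha
      have : a.map h^[k + 1 + 1] = (a.map h).map h^[k + 1] := by
        rw [Function.iterate_succ]; rfl
      rw [this]
      exact ih (a.map h) (hsub (hh a ha))
  have hg : IsHom g Q Q' := by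
    obtain ⟨k, rfl⟩ : ∃ k, n = k + 1 := ⟨n - 1, by omega⟩
    exact hiter k
  -- g '' Q = Q' by minimality of the core
  have himg : Atom.map g '' Q = Q' := by
    apply hmin
    · intro b hb
      obtain ⟨a, ha, rfl⟩ := hb
      exact hg a ha
    · exact ⟨g, fun a ha => Set.mem_image_of_mem _ ha⟩
  -- g fixes qvars Q' pointwise
  have hfix : ∀ x ∈ qvars Q', g x = x := by
    intro x hx
    rw [← himg] at hx
    simp only [qvars, Set.mem_iUnion] at hx
    obtain ⟨b, ⟨a, haQ, rfl⟩, i, hi⟩ := hx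
    have hai : a.args i ∈ qvars Q := by
      simp only [qvars, Set.mem_iUnion]
      exact ⟨a, haQ, ⟨i, rfl⟩⟩
    have : x = g (a.args i) := hi.symm
    rw [this]
    exact hidem (a.args i) hai
  -- g fixes t pointwise
  have hgt : ∀ i, g (t i) = t i := by
    intro i
    apply hfix
    have : t i ∈ Set.range q.args := ht ⟨i, rfl⟩
    simp only [qvars, Set.mem_iUnion]
    exact ⟨q, hq, this⟩
  have hga₀ : a₀.map g = a₀ := by
    show (⟨r₀, g ∘ t⟩ : Atom σ ρ V) = ⟨r₀, t⟩
    congr 1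
    funext i
    exact hgt i
  -- g is a homomorphism insert a₀ Q → insert a₀ Q'
  have hG : IsHom g (insert a₀ Q) (insert a₀ Q') := by
    intro a ha
    rcases ha with rfl | ha
    · rw [hga₀]; exact Set.mem_insert _ _
    · exact Set.mem_insert_of_mem _ (hg a ha)
  have hfinQ' : (insert a₀ Q').Finite := (hfin.subset hsub).insert a₀
  -- find a minimal retract C ⊆ insert a₀ Q'
  have hex : ∃ m : ℕ, ∃ C : Set (Atom σ ρ V),
      (C ⊆ insert a₀ Q' ∧ ∃ f, IsHom f (insert a₀ Q) C) ∧ C.ncard = m :=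
    ⟨_, insert a₀ Q', ⟨subset_rfl, ⟨g, hG⟩⟩, rfl⟩
  obtain ⟨C, ⟨hCsub, f, hf⟩, hCcard⟩ := Nat.find_spec hex
  have hCfin : C.Finite := hfinQ'.subset hCsub
  refine ⟨C, ⟨?_, ⟨f, hf⟩, ?_⟩, ?_⟩
  · exact hCsub.trans (Set.insert_subset_insert hsub)
  · intro C' hC' ⟨f', hf'⟩
    by_contra hne
    have hss : C' ⊂ C := ⟨hC', fun hle => hne (subset_antisymm hC' hle)⟩
    have hlt : C'.ncard < C.ncard := Set.ncard_lt_ncard hss hCfin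
    rw [hCcard] at hlt
    exact Nat.find_min hex hlt ⟨C', ⟨hC'.trans hCsub, ⟨f', hf'⟩⟩, rfl⟩
  · obtain ⟨Ha, hac, h1, h2⟩ := htp
    refine ⟨Ha, hac, ?_, h2⟩
    intro s hs
    obtain ⟨a, haC, rfl⟩ := hs
    rcases hCsub haC with rfl | ha
    · obtain ⟨e, he, hqe⟩ := h1 q.vars ⟨q, hq, rfl⟩
      exact ⟨e, he, fun x hx => hqe (ht hx)⟩
    · exact h1 a.vars ⟨a, ha, rfl⟩
end

section
/- In the Robber and Captain game, if the Captain plays a greedy move from configuration (h_p, M_p, C_p) with h_p ∩ C_p ≠ ∅, choosing M_r = M_p ∪ (h_p ∩ C_p), then every resulting [M_r]-component C_r reachable by the robber satisfies C_r ⊆ C_p and C_r ∩ h_p = ∅ (C_r is an [h_p]-component). -/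
/-- The nodes of a hypergraph. -/
def hgNodes {α : Type*} (H : Set (Set α)) : Set α := ⋃₀ H

/-- The frontier `F(C)` of a set of nodes `C`: the union of all hyperedges meeting `C`. -/
def hgFrontier {α : Type*} (H : Set (Set α)) (C : Set α) : Set α :=
  ⋃₀ {h ∈ H | (h ∩ C).Nonempty}

/-- `[M]`-adjacency: some hyperedge contains both nodes, outside `M`. -/
def adjM {α : Type*} (H : Set (Set α)) (M : Set α) (X Y : α) : Prop :=
  ∃ h ∈ H, X ∈ h ∧ Y ∈ h ∧ X ∉ M ∧ Y ∉ M

/-- `C` is an `[M]`-component of `H`: the set of nodes `[M]`-connected to some node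
outside `M`. -/
def IsComp {α : Type*} (H : Set (Set α)) (M C : Set α) : Prop :=
  ∃ X ∈ hgNodes H, X ∉ M ∧ C = {Y | Relation.ReflTransGen (adjM H M) X Y}

/-- a greedy move from configuration `(h_p, M_p, C_p)` with
`h_p ∩ C_p ≠ ∅`, choosing `M_r = M_p ∪ (h_p ∩ C_p)`: every `[M_r]`-component `C_r`
reachable by the Robber (i.e. with `C_p ∪ C_r` `[M_p ∩ M_r]`-connected) satisfies
`C_r ⊆ C_p` and `C_r ∩ h_p = ∅`. -/
theorem stmt13 {α : Type*} (H : Set (Set α)) (hp Mp Cp Mr Cr : Set α)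
    (hMphp : Mp ⊆ hp) (hCp : IsComp H Mp Cp) (hne : (hp ∩ Cp).Nonempty)
    (hMr : Mr = Mp ∪ (hp ∩ Cp)) (hCr : IsComp H Mr Cr)
    (hconn : ∀ X ∈ Cp ∪ Cr, ∀ Y ∈ Cp ∪ Cr,
      Relation.ReflTransGen (adjM H (Mp ∩ Mr)) X Y) :
    Cr ⊆ Cp ∧ Cr ∩ hp = ∅ := by
  obtain ⟨X0, hX0, hX0M, hCpdef⟩ := hCp
  obtain ⟨X1, hX1, hX1M, hCrdef⟩ := hCr
  have hMpMr : Mp ⊆ Mr := by rw [hMr]; exact Set.subset_union_left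
  have hinter : Mp ∩ Mr = Mp := Set.inter_eq_left.mpr hMpMr
  -- every element of Cr is outside Mr
  have hCrM : ∀ Y ∈ Cr, Y ∉ Mr := by
    intro Y hY
    rw [hCrdef] at hY
    rcases Relation.reflTransGen_iff_eq_or_transGen.mp hY with h | h
    · subst h; exact hX1M
    · obtain ⟨Z, _, e, _, _, _, _, hYM⟩ := Relation.TransGen.tail'_iff.mp h
      exact hYM
  have hX0Cp : X0 ∈ Cp := by rw [hCpdef]; exact Relation.ReflTransGen.refl
  have hsub : Cr ⊆ Cp := by
    intro Y hY
    have := hconn X0 (Or.inl hX0Cp) Y (Or.inr hY)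
    rw [hinter] at this
    rw [hCpdef]; exact this
  refine ⟨hsub, ?_⟩
  ext Y
  simp only [Set.mem_inter_iff, Set.mem_empty_iff_false, iff_false, not_and]
  intro hYCr hYhp
  exact hCrM Y hYCr (hMr ▸ Or.inr ⟨hYhp, hsub hYCr⟩)
end
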